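/- Let D_y, L_y be real matrices with m columns, D_x, L_x real matrices with n columns, G_y, G_x real matrices of compatible sizes, Z₀ a real m×n matrix, and μ, λ real parameters. Define the Tikhonov-regularized cost ε(Z) = ‖D_y Z − G_y‖_F² + ‖Z D_xᵀ − G_x‖_F² + μ² ‖L_y (Z − Z₀)‖_F² + λ² ‖(Z − Z₀) L_xᵀ‖_F² for Z a real m×n matrix. Then Z minimizes ε if and only if Z satisfies the Sylvester equation (D_yᵀ D_y + μ² L_yᵀ L_y) Z + Z (D_xᵀ D_x + λ² L_xᵀ L_x) = D_yᵀ G_y + G_x D_x + μ² L_yᵀ L_y Z₀ + λ² Z₀ L_xᵀ L_x. -/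
import Mathlib


open Matrix

/-- Squared Frobenius norm of a real matrix. -/
noncomputable def frobSq {a b : Type*} [Fintype a] [Fintype b]
    (M : Matrix a b ℝ) : ℝ := ∑ i, ∑ j, (M i j) ^ 2

noncomputable def mip {a b : Type*} [Fintype a] [Fintype b]
    (A B : Matrix a b ℝ) : ℝ := ∑ i, ∑ j, A i j * B i j

variable {a b c : Type*} [Fintype a] [Fintype b] [Fintype c]

lemma mip_eq_trace (A B : Matrix a b ℝ) : mip A B = Matrix.trace (Aᵀ * B) := by
  simp only [mip, Matrix.trace, Matrix.diag, Matrix.mul_apply, Matrix.transpose_apply]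
  rw [Finset.sum_comm]


lemma mip_mul_left (P : Matrix a b ℝ) (X : Matrix a c ℝ) (H : Matrix b c ℝ) :
    mip X (P * H) = mip (Pᵀ * X) H := by
  rw [mip_eq_trace, mip_eq_trace, transpose_mul, transpose_transpose, Matrix.mul_assoc]

lemma mip_mul_right (X : Matrix a b ℝ) (H : Matrix a c ℝ) (Q : Matrix c b ℝ) :
    mip X (H * Q) = mip (X * Qᵀ) H := by
  rw [mip_eq_trace, mip_eq_trace, transpose_mul, transpose_transpose, Matrix.mul_assoc,
    ← Matrix.mul_assoc Xᵀ H Q, Matrix.trace_mul_comm]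

lemma mip_add_left (A B C : Matrix a b ℝ) : mip (A + B) C = mip A C + mip B C := by
  simp [mip, Matrix.add_apply, add_mul, Finset.sum_add_distrib]

lemma mip_sub_left (A B C : Matrix a b ℝ) : mip (A - B) C = mip A C - mip B C := by
  simp [mip, Matrix.sub_apply, sub_mul, Finset.sum_sub_distrib]

lemma mip_smul_left (r : ℝ) (A C : Matrix a b ℝ) : mip (r • A) C = r * mip A C := by
  simp [mip, Matrix.smul_apply, smul_eq_mul, mul_assoc, Finset.mul_sum]

lemma mip_smul_right (r : ℝ) (A C : Matrix a b ℝ) : mip A (r • C) = r * mip A C := by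
  simp [mip, Matrix.smul_apply, smul_eq_mul, Finset.mul_sum, mul_comm, mul_assoc, mul_left_comm]

lemma mip_zero_left (C : Matrix a b ℝ) : mip 0 C = 0 := by simp [mip]

lemma mip_self (A : Matrix a b ℝ) : mip A A = frobSq A := by
  simp [mip, frobSq, sq]

lemma frobSq_nonneg (M : Matrix a b ℝ) : 0 ≤ frobSq M := by
  apply Finset.sum_nonneg; intro i _; apply Finset.sum_nonneg; intro j _; positivity

lemma frobSq_eq_zero {M : Matrix a b ℝ} (h : frobSq M = 0) : M = 0 := by
  ext i j
  have h1 : ∀ i ∈ Finset.univ, (∑ j, (M i j) ^ 2) = 0 := by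
    rw [← Finset.sum_eq_zero_iff_of_nonneg]
    · exact h
    · intro i _; apply Finset.sum_nonneg; intro j _; positivity
  have h2 : ∀ j ∈ Finset.univ, (M i j) ^ 2 = 0 := by
    rw [← Finset.sum_eq_zero_iff_of_nonneg]
    · exact h1 i (Finset.mem_univ i)
    · intro j _; positivity
  have := h2 j (Finset.mem_univ j)
  simpa [pow_eq_zero_iff] using this

lemma frobSq_smul (r : ℝ) (M : Matrix a b ℝ) : frobSq (r • M) = r ^ 2 * frobSq M := by
  simp [frobSq, Matrix.smul_apply, smul_eq_mul, mul_pow, Finset.mul_sum]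

lemma frobSq_add (A B : Matrix a b ℝ) :
    frobSq (A + B) = frobSq A + 2 * mip A B + frobSq B := by
  have h : ∀ i j, (A i j + B i j) ^ 2 = A i j ^ 2 + 2 * (A i j * B i j) + B i j ^ 2 := by
    intro i j; ring
  simp [frobSq, mip, Matrix.add_apply, h, Finset.sum_add_distrib, Finset.mul_sum]

/-- Tikhonov regularization: `Z` minimizes
`ε(Z) = ‖Dy Z − Gy‖_F² + ‖Z Dxᵀ − Gx‖_F² + μ²‖Ly(Z − Z₀)‖_F² + λ²‖(Z − Z₀)Lxᵀ‖_F²`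
iff `Z` satisfies the Sylvester equation
`(Dyᵀ Dy + μ² Lyᵀ Ly) Z + Z (Dxᵀ Dx + λ² Lxᵀ Lx)
  = Dyᵀ Gy + Gx Dx + μ² Lyᵀ Ly Z₀ + λ² Z₀ Lxᵀ Lx`. -/
theorem tikhonov_minimizer_iff_sylvester {k₁ k₂ l₁ l₂ m n : ℕ}
    (Dy : Matrix (Fin k₁) (Fin m) ℝ) (Ly : Matrix (Fin k₂) (Fin m) ℝ)
    (Dx : Matrix (Fin l₁) (Fin n) ℝ) (Lx : Matrix (Fin l₂) (Fin n) ℝ)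
    (Gy : Matrix (Fin k₁) (Fin n) ℝ) (Gx : Matrix (Fin m) (Fin l₁) ℝ)
    (Z₀ : Matrix (Fin m) (Fin n) ℝ) (μ lam : ℝ)
    (ε : Matrix (Fin m) (Fin n) ℝ → ℝ)
    (hε : ∀ Z, ε Z = frobSq (Dy * Z - Gy) + frobSq (Z * Dxᵀ - Gx)
      + μ ^ 2 * frobSq (Ly * (Z - Z₀)) + lam ^ 2 * frobSq ((Z - Z₀) * Lxᵀ))
    (Z : Matrix (Fin m) (Fin n) ℝ) :
    (∀ W : Matrix (Fin m) (Fin n) ℝ, ε Z ≤ ε W) ↔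
      (Dyᵀ * Dy + μ ^ 2 • (Lyᵀ * Ly)) * Z + Z * (Dxᵀ * Dx + lam ^ 2 • (Lxᵀ * Lx)) =
        Dyᵀ * Gy + Gx * Dx + μ ^ 2 • (Lyᵀ * Ly * Z₀) + lam ^ 2 • (Z₀ * (Lxᵀ * Lx)) := by
  set E : Matrix (Fin m) (Fin n) ℝ :=
    (Dyᵀ * Dy + μ ^ 2 • (Lyᵀ * Ly)) * Z + Z * (Dxᵀ * Dx + lam ^ 2 • (Lxᵀ * Lx)) -
      (Dyᵀ * Gy + Gx * Dx + μ ^ 2 • (Lyᵀ * Ly * Z₀) + lam ^ 2 • (Z₀ * (Lxᵀ * Lx))) with hEdef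
  have key : ∀ W : Matrix (Fin m) (Fin n) ℝ,
      ε W = ε Z + 2 * mip E (W - Z)
        + (frobSq (Dy * (W - Z)) + frobSq ((W - Z) * Dxᵀ)
          + μ ^ 2 * frobSq (Ly * (W - Z)) + lam ^ 2 * frobSq ((W - Z) * Lxᵀ)) := by
    intro W
    set H : Matrix (Fin m) (Fin n) ℝ := W - Z with hH
    have hW : W = Z + H := by rw [hH]; abel
    have h1 : Dy * W - Gy = (Dy * Z - Gy) + Dy * H := by rw [hW, Matrix.mul_add]; abel
    have h2 : W * Dxᵀ - Gx = (Z * Dxᵀ - Gx) + H * Dxᵀ := by rw [hW, Matrix.add_mul]; abel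
    have h3 : Ly * (W - Z₀) = Ly * (Z - Z₀) + Ly * H := by
      rw [hW, ← Matrix.mul_add]; congr 1; abel
    have h4 : (W - Z₀) * Lxᵀ = (Z - Z₀) * Lxᵀ + H * Lxᵀ := by
      rw [hW, ← Matrix.add_mul]; congr 1; abel
    rw [hε W, hε Z, h1, h2, h3, h4, frobSq_add, frobSq_add, frobSq_add, frobSq_add]
    have t1 : mip (Dy * Z - Gy) (Dy * H) = mip (Dyᵀ * (Dy * Z - Gy)) H := mip_mul_left _ _ _
    have t2 : mip (Z * Dxᵀ - Gx) (H * Dxᵀ) = mip ((Z * Dxᵀ - Gx) * Dx) H := by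
      rw [mip_mul_right, transpose_transpose]
    have t3 : mip (Ly * (Z - Z₀)) (Ly * H) = mip (Lyᵀ * (Ly * (Z - Z₀))) H := mip_mul_left _ _ _
    have t4 : mip ((Z - Z₀) * Lxᵀ) (H * Lxᵀ) = mip ((Z - Z₀) * Lxᵀ * Lx) H := by
      rw [mip_mul_right, transpose_transpose]
    rw [t1, t2, t3, t4]
    have hsum : mip (Dyᵀ * (Dy * Z - Gy)) H + mip ((Z * Dxᵀ - Gx) * Dx) H
        + μ ^ 2 * mip (Lyᵀ * (Ly * (Z - Z₀))) H + lam ^ 2 * mip ((Z - Z₀) * Lxᵀ * Lx) H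
        = mip E H := by
      rw [hEdef]
      simp only [Matrix.mul_sub, Matrix.sub_mul, Matrix.mul_add, Matrix.add_mul,
        Matrix.smul_mul, Matrix.mul_smul, smul_mul_assoc, mul_smul_comm, mip_add_left, mip_sub_left, mip_smul_left,
        Matrix.mul_assoc]
      ring
    linarith [hsum]
  constructor
  · intro hmin
    have hE : E = 0 := by
      by_contra hne
      have hs : 0 < frobSq E := by
        rcases lt_or_eq_of_le (frobSq_nonneg E) with h | h
        · exact h
        · exact absurd (frobSq_eq_zero h.symm) hne
      set s : ℝ := frobSq E with hsdef
      set Q : ℝ := frobSq (Dy * E) + frobSq (E * Dxᵀ)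
          + μ ^ 2 * frobSq (Ly * E) + lam ^ 2 * frobSq (E * Lxᵀ) with hQdef
      have hQ0 : 0 ≤ Q := by
        have := frobSq_nonneg (Dy * E)
        have := frobSq_nonneg (E * Dxᵀ)
        have := frobSq_nonneg (Ly * E)
        have := frobSq_nonneg (E * Lxᵀ)
        have := sq_nonneg μ
        have := sq_nonneg lam
        nlinarith
      set t : ℝ := s / (Q + s) with htdef
      have ht : 0 < t := div_pos hs (by linarith)
      have hineq : 0 ≤ -2 * t * s + t ^ 2 * Q := by
        have h := hmin (Z + (-t) • E)
        rw [key (Z + (-t) • E)] at h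
        have hWZ : Z + (-t) • E - Z = (-t) • E := by abel
        rw [hWZ] at h
        rw [Matrix.mul_smul, Matrix.smul_mul, Matrix.mul_smul, Matrix.smul_mul] at h
        rw [frobSq_smul, frobSq_smul, frobSq_smul, frobSq_smul, mip_smul_right, mip_self] at h
        have : (-t : ℝ) ^ 2 = t ^ 2 := by ring
        rw [this] at h
        nlinarith [h]
      have htQ : 2 * s ≤ t * Q := by nlinarith
      rw [htdef, div_mul_eq_mul_div, le_div_iff₀ (by linarith : (0:ℝ) < Q + s)] at htQ
      nlinarith
    rw [← sub_eq_zero]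
    calc _ = E := by rw [hEdef]
    _ = 0 := hE
  · intro hsyl
    intro W
    have hE : E = 0 := by rw [hEdef, sub_eq_zero]; exact hsyl
    have hk := key W
    rw [hE, mip_zero_left] at hk
    have q1 := frobSq_nonneg (Dy * (W - Z))
    have q2 := frobSq_nonneg ((W - Z) * Dxᵀ)
    have q3 := frobSq_nonneg (Ly * (W - Z))
    have q4 := frobSq_nonneg ((W - Z) * Lxᵀ)
    have q5 := mul_nonneg (sq_nonneg μ) q3
    have q6 := mul_nonneg (sq_nonneg lam) q4
    linarith [hk.ge, hk.le]
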